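/- If 0 < S ≤ 2ρ/(1+ρ), then W_G(x) < W_M(x) for every x ∈ (0,ρ]: for small vacation length the gated system always performs strictly better than the mixed gated/exhaustive system for any positive high-priority arrival intensity. -/

import Mathlib

/-- Gated mean low-priority waiting time, as a function of the
high-priority occupation rate `x`, with total occupation rate `ρ`
and deterministic vacation length `S`. -/
noncomputable def WG (ρ S x : ℝ) : ℝ :=
  (1 + ρ + x) * (S / (2 * (1 - ρ)) + ρ / (1 - ρ ^ 2))

/-- Mixed gated/exhaustive mean low-priority waiting time, as a function
of the high-priority occupation rate `x`. -/
noncomputable def WM (ρ S x : ℝ) : ℝ :=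
  ρ / ((1 - ρ) * (1 - x)) + S * (1 + ρ * (1 - 2 * x)) / (2 * (1 - ρ) * (1 - x))

/-- if 0 < S ≤ 2ρ/(1+ρ), then W_G(x) < W_M(x) for all x ∈ (0,ρ]. -/
theorem WG_lt_WM_small_S (ρ S : ℝ) (hρ0 : 0 < ρ) (hρ1 : ρ < 1)
    (hS : 0 < S) (hS2 : S ≤ 2 * ρ / (1 + ρ)) :
    ∀ x : ℝ, 0 < x → x ≤ ρ → WG ρ S x < WM ρ S x := by
  intro x hx hxρ
  have h1 : (0:ℝ) < 1 - ρ := by linarith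
  have h2 : (0:ℝ) < 1 + ρ := by linarith
  have h3 : (0:ℝ) < 1 - x := by linarith
  have hA : S * (1 + ρ) ≤ 2 * ρ := by
    rw [le_div_iff₀ h2] at hS2; linarith
  have key : (1+ρ+x)*(S*(1+ρ)+2*ρ)*(1-x) < 2*ρ*(1+ρ) + S*(1+ρ)*(1+ρ*(1-2*x)) := by
    nlinarith [mul_nonneg (mul_nonneg hρ0.le hx.le) (sub_nonneg.2 hA),
      mul_pos (mul_pos hx hx) (add_pos (mul_pos hS h2) (by linarith : (0:ℝ) < 2*ρ))]
  have eG : WG ρ S x = ((1+ρ+x)*(S*(1+ρ)+2*ρ)*(1-x)) / (2*(1-ρ)*(1+ρ)*(1-x)) := by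
    rw [WG, show (1:ℝ)-ρ^2 = (1-ρ)*(1+ρ) from by ring]; field_simp
  have eM : WM ρ S x = (2*ρ*(1+ρ) + S*(1+ρ)*(1+ρ*(1-2*x))) / (2*(1-ρ)*(1+ρ)*(1-x)) := by
    rw [WM]; field_simp
  rw [eG, eM]
  gcongr
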